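/- Let (θ_m)_{m≥1} be partial isometries in B(E, E*) with θ_i* θ_j = 0 and θ_j θ_i* = 0 for all i ≠ j, and suppose ∑_{m≥1} θ_m* θ_m ≤ I. Let T_Θ : H²_E → H²_{E*} be the analytic Toeplitz (multiplication) operator with symbol Θ(z) = ∑_{m≥1} θ_m z^m. Then for f = ∑_{n≥0} a_n z^n ∈ H²_{E*}, one has (I − T_Θ T_Θ*) f = a_0 + ∑_{n≥1} (I − ∑_{m=1}^n θ_m θ_m*) a_n z^n. -/

import Mathlib

open ContinuousLinearMap

/-- A pairwise-orthogonal family with square-summable norms is summable. -/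
lemma summable_of_pairwise_orthogonal_aux {E : Type*} [NormedAddCommGroup E]
    [InnerProductSpace ℂ E] [CompleteSpace E] (g : ℕ → E)
    (horth : ∀ i j : ℕ, i ≠ j → (inner ℂ (g i) (g j) : ℂ) = 0)
    (hsq : Summable (fun i => ‖g i‖ ^ 2)) : Summable g := by
  have hnorm : ∀ t : Finset ℕ, ‖∑ i ∈ t, g i‖ ^ 2 = ∑ i ∈ t, ‖g i‖ ^ 2 := by
    intro t
    induction t using Finset.cons_induction with
    | empty => simp
    | cons i t hi ih =>
      have hz : (inner ℂ (g i) (∑ j ∈ t, g j) : ℂ) = 0 := by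
        rw [inner_sum]
        exact Finset.sum_eq_zero fun j hj => horth i j (fun h => hi (h ▸ hj))
      have hpyth := norm_add_sq_eq_norm_sq_add_norm_sq_of_inner_eq_zero
        (g i) (∑ j ∈ t, g j) hz
      rw [Finset.sum_cons, Finset.sum_cons, ← ih]
      nlinarith [hpyth]
  rw [summable_iff_vanishing]
  intro e he
  rcases Metric.mem_nhds_iff.1 he with ⟨ε, hε, hball⟩
  have hsq' := (summable_iff_vanishing.1 hsq) (Metric.ball 0 (ε ^ 2))
    (Metric.ball_mem_nhds 0 (by positivity))
  rcases hsq' with ⟨s, hs⟩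
  refine ⟨s, fun t ht => hball ?_⟩
  have h1 := hs t ht
  simp only [Metric.mem_ball, dist_zero_right, Real.norm_eq_abs] at h1 ⊢
  have h2 : ∑ i ∈ t, ‖g i‖ ^ 2 < ε ^ 2 := by
    calc ∑ i ∈ t, ‖g i‖ ^ 2 ≤ |∑ i ∈ t, ‖g i‖ ^ 2| := le_abs_self _
      _ < ε ^ 2 := h1
  rw [← hnorm] at h2
  nlinarith [norm_nonneg (∑ i ∈ t, g i)]

set_option maxHeartbeats 1000000 in
theorem defect_operator_formula
    {E F : Type*} [NormedAddCommGroup E] [InnerProductSpace ℂ E] [CompleteSpace E]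
    [NormedAddCommGroup F] [InnerProductSpace ℂ F] [CompleteSpace F]
    (θ : ℕ → E →L[ℂ] F)
    (hpi : ∀ m : ℕ, 1 ≤ m → θ m ∘L adjoint (θ m) ∘L θ m = θ m)
    (horth1 : ∀ i j : ℕ, 1 ≤ i → 1 ≤ j → i ≠ j → adjoint (θ i) ∘L θ j = 0)
    (horth2 : ∀ i j : ℕ, 1 ≤ i → 1 ≤ j → i ≠ j → θ j ∘L adjoint (θ i) = 0)
    (hcontr : ∀ (a : E) (N : ℕ), ∑ m ∈ Finset.Icc 1 N, ‖θ m a‖ ^ 2 ≤ ‖a‖ ^ 2)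
    (f : ℕ → F) (hf : Memℓp f 2) :
    ∀ n : ℕ,
      f n - ∑ m ∈ Finset.Icc 1 n,
          θ m (∑' l : ℕ, adjoint (θ (l + 1)) (f (n - m + (l + 1))))
        = f n - ∑ m ∈ Finset.Icc 1 n, θ m (adjoint (θ m) (f n)) := by
  -- each θ k (k ≥ 1) is a contraction
  have hbound : ∀ k : ℕ, 1 ≤ k → ∀ a : E, ‖θ k a‖ ≤ ‖a‖ := by
    intro k hk a
    have h1 : ‖θ k a‖ ^ 2 ≤ ‖a‖ ^ 2 := by
      refine le_trans ?_ (hcontr a k)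
      exact Finset.single_le_sum (f := fun m => ‖θ m a‖ ^ 2)
        (fun i _ => by positivity) (Finset.mem_Icc.2 ⟨hk, le_refl k⟩)
    nlinarith [norm_nonneg (θ k a), norm_nonneg a]
  have hadjbound : ∀ k : ℕ, 1 ≤ k → ∀ b : F, ‖adjoint (θ k) b‖ ≤ ‖b‖ := by
    intro k hk b
    have hop : ‖θ k‖ ≤ 1 := (θ k).opNorm_le_bound zero_le_one
      (fun a => by simpa using hbound k hk a)
    have := (adjoint (θ k)).le_opNorm b
    have hnorm : ‖adjoint (θ k)‖ = ‖θ k‖ :=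
      LinearIsometryEquiv.norm_map ContinuousLinearMap.adjoint (θ k)
    calc ‖adjoint (θ k) b‖ ≤ ‖adjoint (θ k)‖ * ‖b‖ := this
      _ ≤ 1 * ‖b‖ := by
          apply mul_le_mul_of_nonneg_right _ (norm_nonneg b)
          rw [hnorm]; exact hop
      _ = ‖b‖ := one_mul _
  -- square-summability of ‖f‖
  have hfsq : Summable (fun i => ‖f i‖ ^ 2) := by
    have := hf.summable (p := 2) (by norm_num)
    convert this using 2 with i
    rw [show ((2:ENNReal).toReal) = ((2:ℕ):ℝ) by norm_num, Real.rpow_natCast]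
  intro n
  congr 1
  apply Finset.sum_congr rfl
  intro m hm
  rcases Finset.mem_Icc.1 hm with ⟨hm1, hmn⟩
  set g : ℕ → E := fun l => adjoint (θ (l + 1)) (f (n - m + (l + 1))) with hg
  have hzero : ∀ i j : ℕ, i + 1 ≠ j + 1 → θ (i + 1) (g j) = 0 := by
    intro i j hij
    have h0 := horth2 (j + 1) (i + 1) (Nat.le_add_left 1 j) (Nat.le_add_left 1 i)
      (fun h => hij (h ▸ rfl))
    have h1 := ContinuousLinearMap.ext_iff.1 h0 (f (n - m + (j + 1)))
    simpa [hg, ContinuousLinearMap.comp_apply] using h1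
  have hgorth : ∀ i j : ℕ, i ≠ j → (inner ℂ (g i) (g j) : ℂ) = 0 := by
    intro i j hij
    calc (inner ℂ (g i) (g j) : ℂ)
        = inner ℂ (f (n - m + (i + 1))) (θ (i + 1) (g j)) :=
          ContinuousLinearMap.adjoint_inner_left (θ (i + 1)) (g j) (f (n - m + (i + 1)))
      _ = 0 := by rw [hzero i j (fun h => hij (Nat.succ_injective h))]; simp
  have hgsq : Summable (fun l => ‖g l‖ ^ 2) := by
    have hmaj : Summable fun l => ‖f (n - m + (l + 1))‖ ^ 2 :=
      hfsq.comp_injective (fun a b h => by omega)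
    refine Summable.of_nonneg_of_le (fun l => by positivity) (fun l => ?_) hmaj
    have := hadjbound (l + 1) (Nat.le_add_left 1 l) (f (n - m + (l + 1)))
    nlinarith [norm_nonneg (g l), norm_nonneg (f (n - m + (l + 1)))]
  have hgsum : Summable g := summable_of_pairwise_orthogonal_aux g hgorth hgsq
  rw [ContinuousLinearMap.map_tsum _ hgsum]
  rw [tsum_eq_single (m - 1) ?_]
  · have h1 : m - 1 + 1 = m := Nat.succ_pred_eq_of_pos hm1
    have h2 : n - m + m = n := Nat.sub_add_cancel hmn
    simp only [hg, h1, h2]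
  · intro l hl
    have hlm : l + 1 ≠ m := by omega
    have h0 := horth2 (l + 1) m (Nat.le_add_left 1 l) hm1 hlm
    have h1 := ContinuousLinearMap.ext_iff.1 h0 (f (n - m + (l + 1)))
    simpa [hg, ContinuousLinearMap.comp_apply] using h1
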